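/- Let f be the discrete-logarithm permutation of F_{p^n} defined below, and q = p^n. Then the multiplicative index of f satisfies Ind(f) ≥ (q − 1)/6. -/

import Mathlib

open Polynomial

/-- For `ζ` a primitive element of `𝔽_q` and `g : 𝔽_q → 𝔽_q` with `g 0 = 0`, `g` has
multiplicative index at most `ℓ` (for `ℓ ∣ q - 1`) if there are `r ≥ 1` and
`a_0, …, a_{ℓ-1} ∈ 𝔽_q^*` with `g(x) = a_i x^r` on each cyclotomic coset
`C_i = ζ^i C_0`, where `C_0 = {y^ℓ : y ≠ 0}` is the subgroup of nonzero `ℓ`-th powers. -/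
def HasMulIndAtMost {F : Type*} [Field F] [Fintype F] (ζ : F) (g : F → F) (ℓ : ℕ) : Prop :=
  ℓ ∣ (Fintype.card F - 1) ∧
  ∃ r : ℕ, 0 < r ∧ ∃ a : ℕ → F, (∀ i < ℓ, a i ≠ 0) ∧
    ∀ i < ℓ, ∀ y : F, y ≠ 0 → g (ζ ^ i * y ^ ℓ) = a i * (ζ ^ i * y ^ ℓ) ^ r

/-- The multiplicative index `Ind g` of `g` (with `g 0 = 0`) is the smallest such `ℓ`. -/
noncomputable def mulInd {F : Type*} [Field F] [Fintype F] (ζ : F) (g : F → F) : ℕ :=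
  sInf {ℓ | HasMulIndAtMost ζ g ℓ}

/-- For general `g`, the multiplicative index is that of `x ↦ g x - g 0`. -/
noncomputable def mulInd' {F : Type*} [Field F] [Fintype F] (ζ : F) (g : F → F) : ℕ :=
  mulInd ζ (fun x => g x - g 0)


lemma digitSum (p : ℕ) (m : ℕ) : ∀ x : ℕ, x % p ^ m = ∑ k ∈ Finset.range m, x / p ^ k % p * p ^ k := by
  induction m with
  | zero => simp [Nat.mod_one]
  | succ m ih =>
    intro x
    rw [Finset.sum_range_succ, ← ih x, pow_succ, Nat.mod_mul, Nat.mul_comm]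

lemma geomDigit (p n : ℕ) (hp : 1 ≤ p) : ∑ k ∈ Finset.range n, (p - 1) * p ^ k = p ^ n - 1 := by
  induction n with
  | zero => simp
  | succ n ih =>
    rw [Finset.sum_range_succ, ih, pow_succ, Nat.sub_mul, Nat.mul_comm (p^n) p]
    have h1 : 1 ≤ p ^ n := Nat.one_le_pow _ _ (by omega)
    have h2 : p ^ n ≤ p * p ^ n := Nat.le_mul_of_pos_left _ (by omega)
    omega

lemma succMod (p x : ℕ) (hp : 2 ≤ p) (h : x % p ≠ p - 1) : (x + 1) % p = x % p + 1 := by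
  have h1 : 1 % p = 1 := Nat.mod_eq_of_lt (by omega)
  have h2 : x % p < p := Nat.mod_lt _ (by omega)
  rw [Nat.add_mod, h1, Nat.mod_eq_of_lt (by omega)]

lemma succDiv (p x k : ℕ) (hp : 2 ≤ p) (h : x % p ≠ p - 1) (hk : 1 ≤ k) :
    (x + 1) / p ^ k = x / p ^ k := by
  rw [Nat.succ_div, if_neg, Nat.add_zero]
  intro hdvd
  have hpd : p ∣ x + 1 := dvd_trans (dvd_pow_self p (by omega)) hdvd
  have h3 := succMod p x hp h
  have h2 : x % p < p := Nat.mod_lt _ (by omega)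
  have h0 : (x + 1) % p = 0 := Nat.eq_zero_of_dvd_of_lt hpd (by omega) ▸ (Nat.mod_eq_zero_of_dvd hpd)
  omega

lemma coordsEq {p n : ℕ} [Fact p.Prime] {F : Type*} [Field F] [Algebra (ZMod p) F]
    (b : Module.Basis (Fin n) (ZMod p) F) (lam : F) (hb : ∀ i : Fin n, b i = lam ^ (i : ℕ))
    (c d : Fin n → ℕ) (hc : ∀ k, c k < p) (hd : ∀ k, d k < p)
    (h : ∑ k : Fin n, ((c k : ℕ) : F) * lam ^ (k : ℕ) = ∑ k : Fin n, ((d k : ℕ) : F) * lam ^ (k : ℕ)) :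
    ∀ k, c k = d k := by
  haveI : NeZero p := ⟨(Fact.out : p.Prime).ne_zero⟩
  have h2 : b.equivFun.symm (fun k => ((c k : ZMod p))) = b.equivFun.symm (fun k => ((d k : ZMod p))) := by
    rw [Module.Basis.equivFun_symm_apply, Module.Basis.equivFun_symm_apply]
    simpa only [hb, Algebra.smul_def, map_natCast] using h
  have h4 := b.equivFun.symm.injective h2
  intro k
  have h5 : ((c k : ZMod p)) = ((d k : ZMod p)) := congrFun h4 k
  calc c k = ((c k : ZMod p)).val := (ZMod.val_cast_of_lt (hc k)).symm
    _ = ((d k : ZMod p)).val := by rw [h5]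
    _ = d k := ZMod.val_cast_of_lt (hd k)

/-- Let `f` be the discrete-logarithm permutation of `𝔽_{p^n}` (see below)
and `q = p^n`. Then the multiplicative index of `f` satisfies `Ind f ≥ (q - 1)/6`. -/
theorem stmt18 (p n : ℕ) [Fact p.Prime] (hn : 1 ≤ n) {F : Type*} [Field F]
    [Fintype F] [Algebra (ZMod p) F] (hcard : Fintype.card F = p ^ n)
    (ζ : F) (hζ : ∀ a : F, a ≠ 0 → ∃ x : ℕ, ζ ^ x = a)
    (lam : F) (hlam : ∃ b : Module.Basis (Fin n) (ZMod p) F, ∀ i : Fin n, b i = lam ^ (i : ℕ))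
    (f : F → F)
    (hf : ∀ x : ℕ, x < p ^ n - 1 →
      f (ζ ^ x) = ∑ i : Fin n, ((x / p ^ (i : ℕ) % p : ℕ) : F) * lam ^ (i : ℕ))
    (hf0 : f 0 = - ∑ i : Fin n, lam ^ (i : ℕ)) :
    ((Fintype.card F - 1 : ℕ) : ℝ) / 6 ≤ (mulInd' ζ f : ℝ) := by
  classical
  obtain ⟨b, hb⟩ := hlam
  have hp2 : 2 ≤ p := (Fact.out : p.Prime).two_le
  have hpn2 : 2 ≤ p ^ n := by
    calc 2 ≤ p := hp2
    _ = p ^ 1 := (pow_one p).symm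
    _ ≤ p ^ n := Nat.pow_le_pow_right (by omega) hn
  set q := Fintype.card F with hqdef
  have hq : q = p ^ n := hcard
  have hζ0 : 3 ≤ q → ζ ≠ 0 := by
    intro h3 hz
    have hmem0 : (0 : F) ∈ (Finset.univ : Finset F).erase 1 :=
      Finset.mem_erase.mpr ⟨zero_ne_one, Finset.mem_univ 0⟩
    have hcard2 : 1 ≤ (((Finset.univ : Finset F).erase 1).erase 0).card := by
      rw [Finset.card_erase_of_mem hmem0, Finset.card_erase_of_mem (Finset.mem_univ 1),
        Finset.card_univ]
      omega
    obtain ⟨a, ha⟩ := Finset.card_pos.mp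
      (show 0 < (((Finset.univ : Finset F).erase 1).erase 0).card by omega)
    rw [Finset.mem_erase, Finset.mem_erase] at ha
    obtain ⟨ha0, ha1, -⟩ := ha
    obtain ⟨x, hx⟩ := hζ a ha0
    rw [hz] at hx
    rcases Nat.eq_zero_or_pos x with h | h
    · rw [h, pow_zero] at hx; exact ha1 hx.symm
    · rw [zero_pow (by omega)] at hx; exact ha0 hx.symm
  have hstep : ∀ x : ℕ, x % p ≠ p - 1 → x + 1 < p ^ n - 1 → f (ζ ^ (x + 1)) = f (ζ ^ x) + 1 := by
    intro x hxp hx1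
    rw [hf (x + 1) hx1, hf x (by omega)]
    have key : ∀ i : Fin n, (((x + 1) / p ^ (i : ℕ) % p : ℕ) : F) * lam ^ (i : ℕ)
        = ((x / p ^ (i : ℕ) % p : ℕ) : F) * lam ^ (i : ℕ)
          + (if i = (⟨0, by omega⟩ : Fin n) then 1 else 0) := by
      intro i
      by_cases h0 : i = (⟨0, by omega⟩ : Fin n)
      · rw [if_pos h0, h0]
        simp only [pow_zero, Nat.div_one, mul_one]
        rw [succMod p x hp2 hxp]
        push_cast
        ring
      · have hi : 1 ≤ (i : ℕ) := by
          rcases Nat.eq_zero_or_pos (i : ℕ) with h | h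
          · exact absurd (Fin.ext h) h0
          · exact h
        rw [succDiv p x (i : ℕ) hp2 hxp hi, if_neg h0, add_zero]
    rw [Finset.sum_congr rfl (fun i _ => key i), Finset.sum_add_distrib,
      Finset.sum_ite_eq' Finset.univ (⟨0, by omega⟩ : Fin n) (fun _ => (1 : F)),
      if_pos (Finset.mem_univ _)]
  have hdigeq : ∀ x1 x2 : ℕ, x1 < p ^ n - 1 → x2 < p ^ n - 1 →
      f (ζ ^ x1) = f (ζ ^ x2) → x1 = x2 := by
    intro x1 x2 h1 h2 heq
    rw [hf x1 h1, hf x2 h2] at heq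
    have hco := coordsEq b lam hb (fun k : Fin n => x1 / p ^ (k : ℕ) % p)
      (fun k : Fin n => x2 / p ^ (k : ℕ) % p)
      (fun k => Nat.mod_lt _ (by omega)) (fun k => Nat.mod_lt _ (by omega)) heq
    have e1 : x1 % p ^ n = x2 % p ^ n := by
      rw [digitSum, digitSum]
      exact Finset.sum_congr rfl fun k hk =>
        congrArg (· * p ^ k) (hco ⟨k, Finset.mem_range.mp hk⟩)
    rwa [Nat.mod_eq_of_lt (by omega), Nat.mod_eq_of_lt (by omega)] at e1
  have hfne : ∀ i : ℕ, i < p ^ n - 1 → f (ζ ^ i) ≠ f 0 := by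
    intro i hi hEq
    have hpF : (p : F) = 0 := by
      rw [← map_natCast (algebraMap (ZMod p) F) p, ZMod.natCast_self, map_zero]
    have hm1 : ((p - 1 : ℕ) : F) = -1 := by
      rw [Nat.cast_sub (by omega), hpF]; ring
    have hEq2 : ∑ k : Fin n, ((i / p ^ (k : ℕ) % p : ℕ) : F) * lam ^ (k : ℕ)
        = ∑ k : Fin n, ((p - 1 : ℕ) : F) * lam ^ (k : ℕ) := by
      rw [← hf i hi, hEq, hf0, ← Finset.sum_neg_distrib]
      exact Finset.sum_congr rfl fun k _ => by rw [hm1]; ring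
    have hco := coordsEq b lam hb (fun k : Fin n => i / p ^ (k : ℕ) % p)
      (fun _ => p - 1) (fun k => Nat.mod_lt _ (by omega)) (fun k => by show p - 1 < p; omega) hEq2
    have e1 : i % p ^ n = p ^ n - 1 := by
      rw [digitSum, ← geomDigit p n (by omega)]
      exact Finset.sum_congr rfl fun k hk =>
        congrArg (· * p ^ k) (hco ⟨k, Finset.mem_range.mp hk⟩)
    rw [Nat.mod_eq_of_lt (by omega)] at e1
    omega
  have hnonempty : HasMulIndAtMost ζ (fun x => f x - f 0) (q - 1) := by
    refine ⟨dvd_refl _, 1, one_pos, fun i => (f (ζ ^ i) - f 0) * (ζ ^ i)⁻¹, ?_, ?_⟩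
    · intro i hi
      have hzi : ζ ^ i ≠ 0 := by
        rcases Nat.eq_zero_or_pos i with h | h
        · rw [h, pow_zero]; exact one_ne_zero
        · exact pow_ne_zero _ (hζ0 (by omega))
      exact mul_ne_zero (sub_ne_zero.mpr (hfne i (by omega))) (inv_ne_zero hzi)
    · intro i hi y hy
      have hy1 : y ^ (q - 1) = 1 := FiniteField.pow_card_sub_one_eq_one y hy
      have hzi : ζ ^ i ≠ 0 := by
        rcases Nat.eq_zero_or_pos i with h | h
        · rw [h, pow_zero]; exact one_ne_zero
        · exact pow_ne_zero _ (hζ0 (by omega))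
      simp only [hy1, mul_one, pow_one]
      rw [inv_mul_cancel_right₀ hzi]
  have hmain : ∀ ℓ : ℕ, HasMulIndAtMost ζ (fun x => f x - f 0) ℓ → q - 1 ≤ 6 * ℓ := by
    intro ℓ hℓ
    by_contra hcon
    push_neg at hcon
    obtain ⟨hdvd, r, hr, a, ha0, hkey⟩ := hℓ
    have hℓpos : 0 < ℓ := by
      rcases Nat.eq_zero_or_pos ℓ with h | h
      · rw [h, zero_dvd_iff] at hdvd; omega
      · exact h
    have hq8 : 8 ≤ q := by omega
    have hζ' : ζ ≠ 0 := hζ0 (by omega)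
    have G : ∀ x : ℕ, x % ℓ = 0 → f (ζ ^ x) - f 0 = a 0 * (ζ ^ x) ^ r := by
      intro x hxl
      have h := hkey 0 hℓpos (ζ ^ (x / ℓ)) (pow_ne_zero _ hζ')
      rw [pow_zero, one_mul, ← pow_mul, Nat.div_mul_cancel (Nat.dvd_of_mod_eq_zero hxl)] at h
      exact h
    have E : ∀ x : ℕ, x % ℓ = 0 → x % p ≠ p - 1 → x + 1 < q - 1 →
        (ζ ^ x) ^ r * (a (1 % ℓ) * ζ ^ r - a 0) = 1 := by
      intro x hxl hxp hx1
      have hgx := G x hxl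
      have hgx1 := hkey (1 % ℓ) (Nat.mod_lt 1 hℓpos) (ζ ^ ((x + 1) / ℓ)) (pow_ne_zero _ hζ')
      have hexp : ζ ^ (1 % ℓ) * (ζ ^ ((x + 1) / ℓ)) ^ ℓ = ζ ^ (x + 1) := by
        rw [← pow_mul, ← pow_add]
        congr 1
        have hm : (x + 1) % ℓ = 1 % ℓ := by
          rw [Nat.add_mod, hxl, zero_add, Nat.mod_mod_of_dvd _ dvd_rfl]
        rw [← hm, Nat.mod_add_div']
      rw [hexp] at hgx1
      have hstep' : f (ζ ^ (x + 1)) = f (ζ ^ x) + 1 := hstep x hxp (by omega)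
      have hpow : (ζ ^ (x + 1)) ^ r = (ζ ^ x) ^ r * ζ ^ r := by
        rw [pow_succ, mul_pow]
      have hgx1' : f (ζ ^ (x + 1)) - f 0 = a (1 % ℓ) * ((ζ ^ x) ^ r * ζ ^ r) := by
        rw [← hpow]; exact hgx1
      linear_combination hgx - hgx1' + hstep'
    obtain ⟨k, hk1, hk2, hkp⟩ : ∃ k : ℕ, 1 ≤ k ∧ k ≤ 2 ∧ (k * ℓ) % p ≠ p - 1 := by
      by_cases hmod1 : ℓ % p = p - 1
      · refine ⟨2, by omega, by omega, ?_⟩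
        have h2l : 2 * ℓ = ℓ + ℓ := by ring
        rw [h2l, Nat.add_mod, hmod1]
        have h21 : (p - 1) + (p - 1) = (p - 2) + 1 * p := by omega
        rw [h21, Nat.add_mul_mod_self_right, Nat.mod_eq_of_lt (by omega)]
        omega
      · exact ⟨1, le_refl 1, by omega, by rwa [one_mul]⟩
    have hgood2 : k * ℓ % ℓ = 0 := Nat.mul_mod_left k ℓ
    have hkl1 : k * ℓ + 1 < q - 1 := by
      have : k * ℓ ≤ 2 * ℓ := Nat.mul_le_mul_right _ hk2
      omega
    have e1 := E 0 (Nat.zero_mod ℓ) (by rw [Nat.zero_mod]; omega) (by omega)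
    have e2 := E (k * ℓ) hgood2 hkp hkl1
    by_cases hA : a (1 % ℓ) * ζ ^ r - a 0 = 0
    · rw [hA, mul_zero] at e1
      exact one_ne_zero e1.symm
    · have hre : (ζ ^ (0 : ℕ)) ^ r = (ζ ^ (k * ℓ)) ^ r := mul_right_cancel₀ hA (e1.trans e2.symm)
      have hg1 := G 0 (Nat.zero_mod ℓ)
      have hg2 := G (k * ℓ) hgood2
      have hfe : f (ζ ^ (0 : ℕ)) = f (ζ ^ (k * ℓ)) := by
        have hsub : f (ζ ^ (0 : ℕ)) - f 0 = f (ζ ^ (k * ℓ)) - f 0 := by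
          rw [hg1, hg2, hre]
        exact sub_left_inj.mp hsub
      have hklpos : 0 < k * ℓ := Nat.mul_pos (by omega) hℓpos
      have := hdigeq 0 (k * ℓ) (by omega) (by omega) hfe
      omega
  have hle : q - 1 ≤ 6 * mulInd' ζ f := by
    have hmem : sInf {ℓ | HasMulIndAtMost ζ (fun x => f x - f 0) ℓ} ∈
        {ℓ | HasMulIndAtMost ζ (fun x => f x - f 0) ℓ} :=
      Nat.sInf_mem ⟨q - 1, hnonempty⟩
    exact hmain _ hmem
  rw [div_le_iff₀ (by norm_num : (0:ℝ) < 6)]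
  have hc : ((q - 1 : ℕ) : ℝ) ≤ ((6 * mulInd' ζ f : ℕ) : ℝ) := Nat.cast_le.mpr hle
  push_cast at hc
  linarith
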